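/- Let f : (Fin n → Bool) → Bool be invariant under a permutation π of Fin n, i.e. f(σ ∘ π) = f(σ) for all σ. Then f is satisfiable if and only if there exists an assignment σ with f(σ) = true and σ ≤ σ ∘ π in lexicographic order. In other words, conjoining the lex-leader symmetry breaking predicate for π to f preserves satisfiability. -/

import Mathlib

/-- Lexicographic order on assignments `Fin n → Bool` (earlier indices more significant,
with `false < true`). -/
def lexLe {n : ℕ} (σ τ : Fin n → Bool) : Prop :=
  σ = τ ∨ ∃ i : Fin n, (∀ j, j < i → σ j = τ j) ∧ σ i = false ∧ τ i = true

noncomputable instance lexBoolLinearOrder (n : ℕ) : LinearOrder (Lex (Fin n → Bool)) :=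
  have h : WellFoundedLT (Fin n) := inferInstance
  @Pi.Lex.linearOrder (Fin n) (fun _ => Bool) _ h _

lemma lexLe_of_toLex_le {n : ℕ} {σ τ : Fin n → Bool}
    (h : toLex σ ≤ toLex τ) : lexLe σ τ := by
  rcases eq_or_lt_of_le h with h | h
  · exact Or.inl (toLex.injective h)
  · obtain ⟨i, hj, hi⟩ := h
    have hi' : σ i = false ∧ τ i = true := by simpa [Bool.lt_iff] using hi
    exact Or.inr ⟨i, hj, hi'.1, hi'.2⟩

/-- If `f` is invariant under a permutation `π` of `Fin n`, then `f` is satisfiable iff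
some assignment `σ` satisfies `f` together with the lex-leader symmetry breaking
predicate `σ ≤ σ ∘ π`. -/
theorem stmt_4 {n : ℕ} (f : (Fin n → Bool) → Bool) (π : Equiv.Perm (Fin n))
    (hinv : ∀ σ : Fin n → Bool, f (σ ∘ π) = f σ) :
    (∃ σ : Fin n → Bool, f σ = true) ↔
      (∃ σ : Fin n → Bool, f σ = true ∧ lexLe σ (σ ∘ π)) := by
  constructor
  · rintro ⟨σ, hσ⟩
    obtain ⟨τ, hτ, hmin⟩ := Finset.exists_min_image
      (Finset.univ.filter fun σ : Fin n → Bool => f σ = true)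
      (fun σ => (toLex σ : Lex (Fin n → Bool))) ⟨σ, by simp [hσ]⟩
    simp only [Finset.mem_filter, Finset.mem_univ, true_and] at hτ
    have hπ : f (τ ∘ π) = true := (hinv τ).trans hτ
    exact ⟨τ, hτ, lexLe_of_toLex_le (hmin (τ ∘ π) (by simp [hπ]))⟩
  · rintro ⟨σ, h, _⟩; exact ⟨σ, h⟩
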